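/- For each finite type X, define the total function I¹_X on subsets of Δ_X by: I¹_X(A) = {μ ∈ Δ_X : μ(S) ≥ 1/3} if A = {μ ∈ Δ_X : μ(S) ≥ 1/4} for some S ⊆ X (such S is unique when A ≠ ∅), and I¹_X(A) = A otherwise. Then the family {I¹_X} indexed by all finite types is a finitary inference procedure and it is representation independent. -/

import Mathlib

/-- A probability measure (probability mass function) on a finite type. -/
structure PM (X : Type) [Fintype X] where
  pm : X → ℝ
  nonneg : ∀ x, 0 ≤ pm x
  total : ∑ x, pm x = 1

namespace PM

variable {X Y : Type} [Fintype X] [Fintype Y]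

/-- The probability of a set `S`: `μ(S) = ∑_{x ∈ S} μ(x)`. -/
noncomputable def prob (μ : PM X) (S : Set X) : ℝ := ∑ x, S.indicator μ.pm x

lemma prob_nonneg (μ : PM X) (S : Set X) : 0 ≤ μ.prob S :=
  Finset.sum_nonneg fun x _ => Set.indicator_apply_nonneg fun _ => μ.nonneg x

/-- Marginal on the first component: `μ_X(A) = μ(A × Y)`. -/
noncomputable def margFst (μ : PM (X × Y)) : PM X where
  pm x := ∑ y, μ.pm (x, y)
  nonneg x := Finset.sum_nonneg fun y _ => μ.nonneg (x, y)
  total := by rw [← μ.total, ← Fintype.sum_prod_type]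

/-- Marginal on the second component: `μ_Y(B) = μ(X × B)`. -/
noncomputable def margSnd (μ : PM (X × Y)) : PM Y where
  pm y := ∑ x, μ.pm (x, y)
  nonneg y := Finset.sum_nonneg fun x _ => μ.nonneg (x, y)
  total := by rw [← μ.total, ← Fintype.sum_prod_type_right]

/-- Conditioning `μ|S`; the junk value `μ` is returned when `μ(S) = 0`. -/
noncomputable def cond (μ : PM X) (S : Set X) : PM X :=
  if h : 0 < μ.prob S then
    { pm := fun x => S.indicator μ.pm x / μ.prob S
      nonneg := fun x =>
        div_nonneg (Set.indicator_apply_nonneg fun _ => μ.nonneg x) (le_of_lt h)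
      total := by
        rw [← Finset.sum_div]
        exact div_self (ne_of_gt h) }
  else μ

end PM

open PM

/-- An `X`-inference procedure: a partial map on sets of probability measures. -/
structure InfProc (X : Type) [Fintype X] where
  dom : Set (Set (PM X))
  map : Set (PM X) → Set (PM X)
  map_subset : ∀ A ∈ dom, map A ⊆ A
  map_empty_iff : ∀ A ∈ dom, (map A = ∅ ↔ A = ∅)

/-- `KB ⊢_I θ`. -/
def Infers {X : Type} [Fintype X] (I : InfProc X) (KB θ : Set (PM X)) : Prop :=
  I.map KB ⊆ θ

section Lift

variable {X Y : Type} [Fintype X] [Fintype Y]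

/-- A constraint on `Δ_X` viewed as a constraint on `Δ_{X×Y}`: `KB↑`. -/
def liftKB (Y : Type) [Fintype Y] (KB : Set (PM X)) : Set (PM (X × Y)) :=
  {μ | margFst μ ∈ KB}

/-- `proj_X(B) = {μ_X : μ ∈ B}`. -/
def projFst (B : Set (PM (X × Y))) : Set (PM X) := margFst '' B

/-- `ψ ⊆ Δ_{X×Y}` is `X`-conservative over `KB ⊆ Δ_X`. -/
def Conservative (KB : Set (PM X)) (ψ : Set (PM (X × Y))) : Prop :=
  projFst (liftKB Y KB ∩ ψ) = KB

end Lift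

/-- Robustness of a finitary inference procedure. -/
def Robust (I : ∀ (X : Type) [Fintype X], InfProc X) : Prop :=
  ∀ (X Y : Type) [Fintype X] [Fintype Y], ∀ KB φ : Set (PM X),
    KB ∈ (I X).dom → ∀ ψ : Set (PM (X × Y)), Conservative KB ψ →
      (Infers (I X) KB φ ↔ Infers (I (X × Y)) (liftKB Y KB ∩ ψ) (liftKB Y φ))

/-- An inference procedure is essentially entailment. -/
def EssEntail {X : Type} [Fintype X] (I : InfProc X) : Prop :=
  ∀ KB ∈ I.dom, ∀ (S : Set X) (α β : ℝ),
    Infers I KB {μ | α < μ.prob S ∧ μ.prob S < β} →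
    KB ⊆ {μ | α ≤ μ.prob S ∧ μ.prob S ≤ β}

def DI1 (I : ∀ (X : Type) [Fintype X], InfProc X) : Prop :=
  ∀ (X : Type) [Fintype X], ∀ (S : Set X) (α β : ℝ), α ≤ β →
    {μ : PM X | α ≤ μ.prob S ∧ μ.prob S ≤ β} ∈ (I X).dom

def DI2 (I : ∀ (X : Type) [Fintype X], InfProc X) : Prop :=
  ∀ (X Y : Type) [Fintype X] [Fintype Y], ∀ KB : Set (PM X),
    KB ∈ (I X).dom → liftKB Y KB ∈ (I (X × Y)).dom

def DI3 (I : ∀ (X : Type) [Fintype X], InfProc X) : Prop :=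
  ∀ (X : Type) [Fintype X], ∀ KB₁ KB₂ : Set (PM X),
    KB₁ ∈ (I X).dom → KB₂ ∈ (I X).dom → KB₁ ∩ KB₂ ∈ (I X).dom

/-- An `X`-`Y` embedding: a homomorphism of set algebras. -/
structure Emb (X Y : Type) where
  f : Set X → Set Y
  map_union : ∀ S T, f (S ∪ T) = f S ∪ f T
  map_compl : ∀ S, f Sᶜ = (f S)ᶜ

/-- A faithful embedding. -/
def Emb.Faithful {X Y : Type} (e : Emb X Y) : Prop :=
  ∀ S T : Set X, S ⊆ T ↔ e.f S ⊆ e.f T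

section Embeddings

variable {X Y : Type} [Fintype X] [Fintype Y]

/-- `μ` and `ν` correspond under `f`. -/
def Corr (e : Emb X Y) (μ : PM X) (ν : PM Y) : Prop :=
  ∀ S : Set X, μ.prob S = ν.prob (e.f S)

/-- `f*(D)`, the union over `μ ∈ D` of the measures corresponding to `μ`. -/
def fstar (e : Emb X Y) (D : Set (PM X)) : Set (PM Y) :=
  {ν | ∃ μ ∈ D, Corr e μ ν}

/-- Sets of measures `D_X` and `D_Y` correspond under `f`. -/
def SetCorr (e : Emb X Y) (DX : Set (PM X)) (DY : Set (PM Y)) : Prop :=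
  (∀ ν ∈ DY, ∃ μ ∈ DX, Corr e μ ν) ∧ (∀ μ ∈ DX, ∃ ν ∈ DY, Corr e μ ν)

end Embeddings

/-- Representation independence of a finitary inference procedure. -/
def RepInd (I : ∀ (X : Type) [Fintype X], InfProc X) : Prop :=
  ∀ (X Y : Type) [Fintype X] [Fintype Y] (e : Emb X Y), e.Faithful →
    (∀ KB : Set (PM X), KB ∈ (I X).dom ↔ fstar e KB ∈ (I Y).dom) ∧
    (∀ KB : Set (PM X), KB ∈ (I X).dom → ∀ θ : Set (PM X),
      (Infers (I X) KB θ ↔ Infers (I Y) (fstar e KB) (fstar e θ)))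

def DI4 (I : ∀ (X : Type) [Fintype X], InfProc X) : Prop :=
  ∀ (X Y : Type) [Fintype X] [Fintype Y] (e : Emb X Y), e.Faithful →
    ∀ KB : Set (PM X), (KB ∈ (I X).dom ↔ fstar e KB ∈ (I Y).dom)

/-- `A ⇔ B` for sets of measures. -/
def iffSet {α : Type*} (A B : Set α) : Set α := (A ∩ B) ∪ (Aᶜ ∩ Bᶜ)

def DI5 (I : ∀ (X : Type) [Fintype X], InfProc X) : Prop :=
  ∀ (X Y : Type) [Fintype X] [Fintype Y] (KB : Set (PM (X × Y))) (e : Emb X Y),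
    e.Faithful → KB ∈ (I (X × Y)).dom → ∀ φ₁ : Set (PM X),
      KB ∩ iffSet (liftKB Y φ₁) {μ | margSnd μ ∈ fstar e φ₁} ∈ (I (X × Y)).dom

/-- Minimal default independence. -/
def MDI (I : ∀ (X : Type) [Fintype X], InfProc X) : Prop :=
  ∀ (X Y : Type) [Fintype X] [Fintype Y], ∀ KB : Set (PM X), ∀ (S : Set X) (T : Set Y),
    liftKB Y KB ∈ (I (X × Y)).dom →
    Infers (I (X × Y)) (liftKB Y KB)
      {μ | μ.prob (S ×ˢ T) = μ.prob (S ×ˢ (Set.univ : Set Y)) * μ.prob ((Set.univ : Set X) ×ˢ T)}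

/-- `KB` depends only on `S₁, …, S_k`. -/
def DependsOnly {X : Type} [Fintype X] {k : ℕ} (KB : Set (PM X)) (S : Fin k → Set X) : Prop :=
  ∀ μ μ' : PM X, (∀ i, μ.prob (S i) = μ'.prob (S i)) → (μ ∈ KB ↔ μ' ∈ KB)

/-- An atom over `S₁, …, S_k`. -/
def Atom {X : Type} {k : ℕ} (S : Fin k → Set X) (c : Fin k → Bool) : Set X :=
  ⋂ i, (if c i then S i else (S i)ᶜ)

section KL

variable {X : Type} [Fintype X]

/-- Absolute continuity of pmfs. -/
def AbsCont (μ' μ : PM X) : Prop := ∀ x, μ.pm x = 0 → μ'.pm x = 0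

/-- Relative entropy `D(μ'‖μ) ∈ [0,∞]` (it is `⊤` unless `μ' ≪ μ`). -/
noncomputable def KL (μ' μ : PM X) : EReal := by
  classical
  exact if AbsCont μ' μ then
    ((∑ x, μ'.pm x * Real.log (μ'.pm x / μ.pm x) : ℝ) : EReal)
  else ⊤

/-- The relative-entropy projection `μ|θ`. -/
def klProj (μ : PM X) (θ : Set (PM X)) : Set (PM X) :=
  {μ' | μ' ∈ θ ∧ KL μ' μ ≠ ⊤ ∧ ∀ μ'' ∈ θ, KL μ' μ ≤ KL μ'' μ}

/-- `D|θ = ⋃_{μ ∈ D} μ|θ`. -/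
def DProj (D : Set (PM X)) (θ : Set (PM X)) : Set (PM X) :=
  ⋃ μ ∈ D, klProj μ θ

end KL

section Products

variable {n : ℕ} {X : Fin n → Type} [∀ i, Fintype (X i)]

/-- The `i`-th marginal of a measure on a finite product. -/
noncomputable def margPi (μ : PM (∀ i, X i)) (i : Fin n) : PM (X i) where
  pm a := μ.prob {x | x i = a}
  nonneg a := PM.prob_nonneg _ _
  total := by
    classical
    unfold PM.prob
    rw [Finset.sum_comm]
    have h : ∀ x : (∀ i, X i),
        (∑ a, ({y : ∀ j, X j | y i = a}).indicator μ.pm x) = μ.pm x := by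
      intro x
      simp [Set.indicator_apply]
    simp only [h]
    exact μ.total

/-- `μ` is a product measure on `X₁ × ⋯ × Xₙ`. -/
def IsProdPM (μ : PM (∀ i, X i)) : Prop :=
  ∃ μi : ∀ i, PM (X i), ∀ U : ∀ i, Set (X i),
    μ.prob {x | ∀ i, x i ∈ U i} = ∏ i, (μi i).prob (U i)

end Products

/-- The set `P_Π(X)` of product measures. -/
def PPi {n : ℕ} (X : Fin n → Type) [∀ i, Fintype (X i)] : Set (PM (∀ i, X i)) :=
  {μ | IsProdPM μ}

/-- `e` is a product embedding. -/
def IsProdEmb {n : ℕ} {X Y : Fin n → Type} (e : Emb (∀ i, X i) (∀ i, Y i)) : Prop :=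
  ∃ ei : ∀ i, Emb (X i) (Y i), ∀ S : Set (∀ i, X i),
    e.f S = ⋃ x ∈ S, {y | ∀ i, y i ∈ (ei i).f {x i}}

set_option linter.unusedTactic false
set_option linter.unnecessarySimpa false

section Stmt11Aux

attribute [local instance] Classical.propDecidable
set_option linter.unusedSectionVars false

variable {X Y : Type} [Fintype X] [Fintype Y]

lemma PM.pm_ext {μ ν : PM X} (h : ∀ x, μ.pm x = ν.pm x) : μ = ν := by
  cases μ; cases ν; simp only [PM.mk.injEq]; exact funext h

noncomputable def dirac (x : X) : PM X where
  pm y := if y = x then 1 else 0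
  nonneg y := by split <;> norm_num
  total := by simp

lemma dirac_prob (x : X) (S : Set X) :
    (dirac x).prob S = if x ∈ S then 1 else 0 := by
  unfold PM.prob dirac
  simp only [Set.indicator_apply]
  have key : ∀ y : X, (if y ∈ S then (if y = x then (1:ℝ) else 0) else 0)
      = if y = x then (if x ∈ S then 1 else 0) else 0 := by
    intro y
    by_cases h2 : y = x
    · subst h2; simp
    · simp [h2]
  rw [Finset.sum_congr rfl fun y _ => key y]
  simp

lemma prob_empty (μ : PM X) : μ.prob (∅ : Set X) = 0 := by simp [PM.prob]

lemma prob_univ (μ : PM X) : μ.prob (Set.univ : Set X) = 1 := by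
  simp [PM.prob, μ.total]

lemma prob_singleton (μ : PM X) (x : X) : μ.prob {x} = μ.pm x := by
  unfold PM.prob
  simp [Set.indicator_apply]

lemma set_of_le_prob_eq {S T : Set X}
    (h : {μ : PM X | 1/4 ≤ μ.prob S} = {μ : PM X | 1/4 ≤ μ.prob T}) : S = T := by
  ext x
  have h1 := Set.ext_iff.mp h (dirac x)
  simp only [Set.mem_setOf_eq, dirac_prob] at h1
  constructor
  · intro hx
    by_contra hx'
    rw [if_pos hx, if_neg hx'] at h1
    norm_num at h1
  · intro hx
    by_contra hx'
    rw [if_neg hx', if_pos hx] at h1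
    norm_num at h1

lemma Emb.map_inter (e : Emb X Y) (S T : Set X) : e.f (S ∩ T) = e.f S ∩ e.f T := by
  have h : S ∩ T = (Sᶜ ∪ Tᶜ)ᶜ := by simp [Set.compl_union]
  rw [h, e.map_compl, e.map_union, e.map_compl, e.map_compl, Set.compl_union,
    compl_compl, compl_compl]

lemma Emb.map_empty (e : Emb X Y) : e.f ∅ = ∅ := by
  have h := e.map_inter ∅ ∅ᶜ
  rw [Set.inter_compl_self, e.map_compl, Set.inter_compl_self] at h
  exact h

lemma Emb.map_univ (e : Emb X Y) : e.f Set.univ = Set.univ := by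
  have h : (Set.univ : Set X) = ∅ᶜ := by simp
  rw [h, e.map_compl, e.map_empty, Set.compl_empty]

lemma Emb.mono (e : Emb X Y) {S T : Set X} (h : S ⊆ T) : e.f S ⊆ e.f T := by
  have hT : T = S ∪ T := (Set.union_eq_self_of_subset_left h).symm
  rw [hT, e.map_union]
  exact Set.subset_union_left

lemma Emb.atoms_disjoint (e : Emb X Y) {x x' : X} (h : x ≠ x') :
    e.f {x} ∩ e.f {x'} = ∅ := by
  rw [← e.map_inter]
  have h2 : ({x} : Set X) ∩ {x'} = ∅ := by
    ext z; simp only [Set.mem_inter_iff, Set.mem_singleton_iff, Set.mem_empty_iff_false,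
      iff_false, not_and]
    rintro rfl; exact h
  rw [h2, e.map_empty]

lemma Emb.map_biUnion (e : Emb X Y) (s : Finset X) (g : X → Set X) :
    e.f (⋃ x ∈ s, g x) = ⋃ x ∈ s, e.f (g x) := by
  classical
  induction s using Finset.induction with
  | empty => simp [e.map_empty]
  | insert a s hx ih =>
    rw [Finset.set_biUnion_insert, Finset.set_biUnion_insert, e.map_union, ih]

lemma Emb.eq_biUnion_atoms (e : Emb X Y) (S : Set X) :
    e.f S = ⋃ x ∈ S.toFinset, e.f {x} := by
  rw [← e.map_biUnion]
  congr 1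
  ext z
  simp

lemma prob_eq_sum_atoms (e : Emb X Y) (ν : PM Y) (S : Set X) :
    ν.prob (e.f S) = ∑ x, S.indicator (fun x => ν.prob (e.f {x})) x := by
  unfold PM.prob
  simp only [Set.indicator_apply]
  have key : ∀ y : Y, (if y ∈ e.f S then ν.pm y else 0) =
      ∑ x : X, if x ∈ S then (if y ∈ e.f {x} then ν.pm y else 0) else 0 := by
    intro y
    by_cases hy : y ∈ e.f S
    · rw [if_pos hy]
      have hy' : y ∈ ⋃ x ∈ S.toFinset, e.f {x} := by rwa [← e.eq_biUnion_atoms]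
      obtain ⟨x₀, hx₀S, hx₀⟩ : ∃ x₀, x₀ ∈ S ∧ y ∈ e.f {x₀} := by
        simp only [Set.mem_iUnion, Finset.mem_coe, Set.mem_toFinset] at hy'
        obtain ⟨x₀, h1, h2⟩ := hy'
        exact ⟨x₀, h1, h2⟩
      rw [Finset.sum_eq_single x₀]
      · rw [if_pos hx₀S, if_pos hx₀]
      · intro x _ hne
        by_cases hxS : x ∈ S
        · rw [if_pos hxS, if_neg]
          intro hyx
          have := e.atoms_disjoint hne
          exact absurd (Set.mem_inter hyx hx₀) (by rw [this]; exact id)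
        · rw [if_neg hxS]
      · intro h; exact absurd (Finset.mem_univ x₀) h
    · rw [if_neg hy]
      symm
      apply Finset.sum_eq_zero
      intro x _
      by_cases hxS : x ∈ S
      · rw [if_pos hxS, if_neg]
        intro hyx
        exact hy (e.mono (Set.singleton_subset_iff.mpr hxS) hyx)
      · rw [if_neg hxS]
  rw [Finset.sum_congr rfl fun y _ => key y, Finset.sum_comm]
  exact Finset.sum_congr rfl fun x _ => by by_cases hx : x ∈ S <;> simp [hx]

noncomputable def pullPM (e : Emb X Y) (ν : PM Y) : PM X where
  pm x := ν.prob (e.f {x})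
  nonneg x := PM.prob_nonneg _ _
  total := by
    have h := prob_eq_sum_atoms e ν Set.univ
    rw [e.map_univ, prob_univ] at h
    simp only [Set.indicator_univ] at h
    exact h.symm

lemma pull_prob (e : Emb X Y) (ν : PM Y) (S : Set X) :
    (pullPM e ν).prob S = ν.prob (e.f S) := by
  unfold PM.prob pullPM
  exact (prob_eq_sum_atoms e ν S).symm

lemma corr_iff_pull (e : Emb X Y) (μ : PM X) (ν : PM Y) :
    Corr e μ ν ↔ pullPM e ν = μ := by
  constructor
  · intro h
    apply PM.pm_ext
    intro x
    show ν.prob (e.f {x}) = μ.pm x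
    rw [← h {x}, prob_singleton]
  · rintro rfl S
    exact pull_prob e ν S

lemma fstar_eq_preimage (e : Emb X Y) (KB : Set (PM X)) :
    fstar e KB = pullPM e ⁻¹' KB := by
  ext ν
  constructor
  · rintro ⟨μ, hμ, hc⟩
    have := (corr_iff_pull e μ ν).mp hc
    show pullPM e ν ∈ KB
    rwa [this]
  · intro h
    exact ⟨pullPM e ν, h, (corr_iff_pull e _ ν).mpr rfl⟩

lemma atom_nonempty (e : Emb X Y) (he : e.Faithful) (x : X) :
    (e.f {x}).Nonempty := by
  by_contra h
  rw [Set.not_nonempty_iff_eq_empty] at h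
  have h2 : e.f {x} ⊆ e.f ∅ := by rw [h, e.map_empty]
  have := (he {x} ∅).mpr h2
  simpa using this

lemma pull_surj (e : Emb X Y) (he : e.Faithful) : Function.Surjective (pullPM e) := by
  intro μ
  choose g hg using fun x => atom_nonempty e he x
  have hmem : ∀ x x' : X, g x ∈ e.f {x'} ↔ x = x' := by
    intro x x'
    constructor
    · intro h
      by_contra hne
      have := e.atoms_disjoint hne
      exact absurd (Set.mem_inter (hg x) h) (by rw [this]; exact id)
    · rintro rfl; exact hg x
  refine ⟨⟨fun y => ∑ x, if g x = y then μ.pm x else 0, fun y => ?_, ?_⟩, ?_⟩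
  · refine Finset.sum_nonneg fun x _ => ?_
    split
    · exact μ.nonneg x
    · exact le_refl 0
  · rw [Finset.sum_comm]
    rw [Finset.sum_congr rfl fun x _ => Finset.sum_ite_eq Finset.univ (g x) (fun _ => μ.pm x)]
    simpa using μ.total
  · apply PM.pm_ext
    intro x₀
    show (PM.mk _ _ _).prob (e.f {x₀}) = μ.pm x₀
    unfold PM.prob
    simp only [Set.indicator_apply]
    have key : ∀ y : Y, (if y ∈ e.f {x₀} then (∑ x, if g x = y then μ.pm x else 0) else 0)
        = ∑ x, if g x = y then (if y ∈ e.f {x₀} then μ.pm x else 0) else 0 := by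
      intro y
      by_cases hy : y ∈ e.f {x₀}
      · rw [if_pos hy]
        exact Finset.sum_congr rfl fun x _ => by simp [hy]
      · rw [if_neg hy]
        symm
        apply Finset.sum_eq_zero
        intro x _
        simp [hy]
    rw [Finset.sum_congr rfl fun y _ => key y, Finset.sum_comm]
    rw [Finset.sum_congr rfl fun x _ =>
      Finset.sum_ite_eq Finset.univ (g x) (fun y => if y ∈ e.f {x₀} then μ.pm x else 0)]
    simp only [Finset.mem_univ, if_true]
    rw [Finset.sum_congr rfl (fun x _ => ?_), Finset.sum_ite_eq' Finset.univ x₀ (fun _ => μ.pm x₀)]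
    · simp
    · show (if g x ∈ e.f {x₀} then μ.pm x else 0) = if x = x₀ then μ.pm x₀ else 0
      by_cases h : x = x₀
      · subst h; rw [if_pos (hg x), if_pos rfl]
      · rw [if_neg (fun hc => h ((hmem x x₀).mp hc)), if_neg h]

end Stmt11Aux
section Stmt11Main

attribute [local instance] Classical.propDecidable
set_option linter.unusedSectionVars false

variable {X Y : Type} [Fintype X] [Fintype Y]

lemma thr_empty_iff (S : Set X) :
    ({μ : PM X | 1/3 ≤ μ.prob S} = ∅) ↔ ({μ : PM X | 1/4 ≤ μ.prob S} = ∅) := by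
  rw [← Set.not_nonempty_iff_eq_empty, ← Set.not_nonempty_iff_eq_empty]
  apply not_congr
  constructor
  · rintro ⟨μ, hμ⟩
    simp only [Set.mem_setOf_eq] at hμ
    refine ⟨μ, ?_⟩
    simp only [Set.mem_setOf_eq]
    linarith
  · rintro ⟨μ, hμ⟩
    simp only [Set.mem_setOf_eq] at hμ
    rcases Set.eq_empty_or_nonempty S with hS | ⟨x, hx⟩
    · exfalso
      rw [hS, prob_empty] at hμ
      norm_num at hμ
    · refine ⟨dirac x, ?_⟩
      simp only [Set.mem_setOf_eq, dirac_prob, if_pos hx]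
      norm_num

noncomputable def I1 (X : Type) [Fintype X] : InfProc X where
  dom := Set.univ
  map A := if h : ∃ S : Set X, A = {μ : PM X | 1/4 ≤ μ.prob S}
    then {μ : PM X | 1/3 ≤ μ.prob h.choose} else A
  map_subset A _ := by
    split_ifs with h
    · intro μ hμ
      rw [h.choose_spec]
      simp only [Set.mem_setOf_eq] at hμ ⊢
      linarith
    · exact subset_rfl
  map_empty_iff A _ := by
    split_ifs with h
    · constructor
      · intro h13
        rw [h.choose_spec]
        exact (thr_empty_iff _).mp h13
      · intro hA
        rw [h.choose_spec] at hA
        exact (thr_empty_iff _).mpr hA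
    · exact Iff.rfl

lemma I1_map_thr (S : Set X) :
    (I1 X).map {μ : PM X | 1/4 ≤ μ.prob S} = {μ : PM X | 1/3 ≤ μ.prob S} := by
  have hex : ∃ T : Set X, {μ : PM X | 1/4 ≤ μ.prob S} = {μ : PM X | 1/4 ≤ μ.prob T} := ⟨S, rfl⟩
  have h1 : (I1 X).map {μ : PM X | 1/4 ≤ μ.prob S} = {μ : PM X | 1/3 ≤ μ.prob hex.choose} :=
    dif_pos hex
  rw [h1, ← set_of_le_prob_eq hex.choose_spec]

lemma I1_map_ne {A : Set (PM X)}
    (h : ¬ ∃ S : Set X, A = {μ : PM X | 1/4 ≤ μ.prob S}) : (I1 X).map A = A :=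
  dif_neg h

lemma preim_subset_iff (e : Emb X Y) (he : e.Faithful) {A B : Set (PM X)} :
    pullPM e ⁻¹' A ⊆ pullPM e ⁻¹' B ↔ A ⊆ B := by
  constructor
  · intro h μ hμ
    obtain ⟨ν, rfl⟩ := pull_surj e he μ
    exact h hμ
  · exact fun h => Set.preimage_mono h

lemma pull_dirac_atom (e : Emb X Y) {x : X} {y : Y} (hy : y ∈ e.f {x}) (x' : X) :
    (pullPM e (dirac y)).pm x' = if x' = x then 1 else 0 := by
  show (dirac y).prob (e.f {x'}) = _
  rw [dirac_prob]
  by_cases h : x' = x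
  · subst h; rw [if_pos hy, if_pos rfl]
  · rw [if_neg, if_neg h]
    intro hc
    have hd := e.atoms_disjoint h
    exact absurd (Set.mem_inter hc hy) (by rw [hd]; exact id)

lemma exists_S_of_preimage_thr (e : Emb X Y) (he : e.Faithful) (KB : Set (PM X)) (T : Set Y)
    (h : pullPM e ⁻¹' KB = {ν : PM Y | 1/4 ≤ ν.prob T}) :
    ∃ S : Set X, KB = {μ : PM X | 1/4 ≤ μ.prob S} := by
  set S : Set X := {x | e.f {x} ⊆ T} with hSdef
  refine ⟨S, ?_⟩
  have hT : T = e.f S := by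
    apply Set.Subset.antisymm
    · intro y hy
      have hyuniv : y ∈ e.f Set.univ := by rw [e.map_univ]; trivial
      rw [e.eq_biUnion_atoms] at hyuniv
      simp only [Set.mem_iUnion, Set.mem_toFinset, Set.mem_univ, exists_prop] at hyuniv
      obtain ⟨x, -, hyx⟩ := hyuniv
      have h1 : dirac y ∈ pullPM e ⁻¹' KB := by
        rw [h]
        simp only [Set.mem_setOf_eq, dirac_prob, if_pos hy]
        norm_num
      have hsub : e.f {x} ⊆ T := by
        intro y' hy'
        have h2 : pullPM e (dirac y') = pullPM e (dirac y) :=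
          PM.pm_ext fun x' => by rw [pull_dirac_atom e hy' x', pull_dirac_atom e hyx x']
        have h3 : dirac y' ∈ pullPM e ⁻¹' KB := by
          show pullPM e (dirac y') ∈ KB
          rw [h2]
          exact h1
        rw [h] at h3
        simp only [Set.mem_setOf_eq, dirac_prob] at h3
        by_contra hy'T
        rw [if_neg hy'T] at h3
        norm_num at h3
      have hxS : x ∈ S := hsub
      exact e.mono (Set.singleton_subset_iff.mpr hxS) hyx
    · rw [e.eq_biUnion_atoms]
      refine Set.iUnion₂_subset fun x hx => ?_
      have hxS : x ∈ S := Set.mem_toFinset.mp hx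
      exact hxS
  have key : pullPM e ⁻¹' KB = pullPM e ⁻¹' {μ : PM X | 1/4 ≤ μ.prob S} := by
    rw [h, hT]
    ext ν
    simp [pull_prob]
  exact (pull_surj e he).preimage_injective key

end Stmt11Main
/-- the inference procedure `I¹` (strengthening
`Pr(S) ≥ 1/4` to `Pr(S) ≥ 1/3`, and acting as entailment otherwise) is a
finitary inference procedure with total domain, and it is representation
independent. -/
theorem stmt11 :
    ∃ I : ∀ (X : Type) [Fintype X], InfProc X,
      (∀ (X : Type) [Fintype X], (I X).dom = Set.univ) ∧
      (∀ (X : Type) [Fintype X] (S : Set X),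
        (I X).map {μ : PM X | 1/4 ≤ μ.prob S} = {μ : PM X | 1/3 ≤ μ.prob S}) ∧
      (∀ (X : Type) [Fintype X] (A : Set (PM X)),
        (¬ ∃ S : Set X, A = {μ : PM X | 1/4 ≤ μ.prob S}) → (I X).map A = A) ∧
      RepInd I := by
  classical
  refine ⟨I1, fun X _ => rfl, fun X _ S => I1_map_thr S, fun X _ A h => I1_map_ne h, ?_⟩
  intro X Y _ _ e he
  refine ⟨fun KB => ⟨fun _ => trivial, fun _ => trivial⟩, ?_⟩
  intro KB _ θ
  unfold Infers
  rw [fstar_eq_preimage, fstar_eq_preimage]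
  by_cases h : ∃ S : Set X, KB = {μ : PM X | 1/4 ≤ μ.prob S}
  · obtain ⟨S, rfl⟩ := h
    rw [I1_map_thr]
    have h1 : pullPM e ⁻¹' {μ : PM X | 1/4 ≤ μ.prob S} = {ν : PM Y | 1/4 ≤ ν.prob (e.f S)} := by
      ext ν
      simp [pull_prob]
    rw [h1, I1_map_thr]
    have h2 : {ν : PM Y | 1/3 ≤ ν.prob (e.f S)} = pullPM e ⁻¹' {μ : PM X | 1/3 ≤ μ.prob S} := by
      ext ν
      simp [pull_prob]
    rw [h2]
    exact (preim_subset_iff e he).symm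
  · rw [I1_map_ne h]
    have h' : ¬ ∃ T : Set Y, pullPM e ⁻¹' KB = {ν : PM Y | 1/4 ≤ ν.prob T} := by
      rintro ⟨T, hT⟩
      exact h (exists_S_of_preimage_thr e he KB T hT)
    rw [I1_map_ne h']
    exact (preim_subset_iff e he).symm
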